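/- If P is row-stochastic and irreducible, i.e. every state reaches every other state, then there exists a real number γ such that the Cesàro averages of expected rewards converge to the constant vector γ: the sequence n ↦ (n : ℝ)⁻¹ • ∑_{k=0}^{n-1} (P^k).mulVec r tends to the function s ↦ γ as n → ∞. (This is the fact that all states of a strongly connected Markov chain—and hence of a BSCC or MEC—have the same gain, underlying the MEC decomposition of Section 4.1.) -/

import Mathlib

open Matrix Finset

/-- A matrix is row-stochastic if all entries are nonnegative and every row sums to 1. -/
def IsRowStochastic {S : Type*} [Fintype S] (P : Matrix S S ℝ) : Prop :=
  (∀ s s', 0 ≤ P s s') ∧ ∀ s, ∑ s', P s s' = 1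

/-- `s` reaches `s'` if `(s, s')` is in the reflexive-transitive closure of the relation
"leads to", i.e. `P s s' > 0`. -/
def Reaches {S : Type*} (P : Matrix S S ℝ) : S → S → Prop :=
  Relation.ReflTransGen fun s s' => 0 < P s s'

lemma IsRowStochastic.pow {S : Type*} [Fintype S] [DecidableEq S] {P : Matrix S S ℝ}
    (hP : IsRowStochastic P) (k : ℕ) : IsRowStochastic (P ^ k) := by
  induction k with
  | zero =>
    refine ⟨fun s s' => ?_, fun s => ?_⟩
    · simp only [pow_zero, Matrix.one_apply]
      split <;> norm_num
    · simp [pow_zero, Matrix.one_apply]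
  | succ k ih =>
    rw [pow_succ]
    refine ⟨fun s s' => ?_, fun s => ?_⟩
    · rw [Matrix.mul_apply]
      exact Finset.sum_nonneg fun u _ => mul_nonneg (ih.1 s u) (hP.1 u s')
    · simp only [Matrix.mul_apply]
      rw [Finset.sum_comm]
      calc ∑ u, ∑ s', (P ^ k) s u * P u s'
          = ∑ u, (P ^ k) s u * ∑ s', P u s' := by simp [Finset.mul_sum]
        _ = 1 := by simp [hP.2, ih.2 s]

lemma entry_le_one {S : Type*} [Fintype S] {P : Matrix S S ℝ}
    (hP : IsRowStochastic P) (s t : S) : P s t ≤ 1 := by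
  calc P s t ≤ ∑ t', P s t' := Finset.single_le_sum (fun u _ => hP.1 s u) (Finset.mem_univ t)
    _ = 1 := hP.2 s

lemma exists_stationary {S : Type*} [Fintype S] [DecidableEq S] [Nonempty S]
    (P : Matrix S S ℝ) (hP : IsRowStochastic P) :
    ∃ π : S → ℝ, (∀ s, 0 ≤ π s) ∧ (∑ s, π s = 1) ∧ π ᵥ* P = π := by
  classical
  set s0 : S := Classical.arbitrary S
  set q : ℕ → S → ℝ := fun k t => (P ^ k) s0 t with hq
  set a : ℕ → S → ℝ := fun n => (n : ℝ)⁻¹ • ∑ k ∈ Finset.range n, q k with ha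
  -- row evolution
  have hvecq : ∀ k, q k ᵥ* P = q (k + 1) := by
    intro k; funext t
    simp only [hq, Matrix.vecMul, dotProduct, pow_succ, Matrix.mul_apply]
  have hvec : ∀ n, a n ᵥ* P = (n : ℝ)⁻¹ • ∑ k ∈ Finset.range n, q (k + 1) := by
    intro n; funext t
    simp only [ha, Matrix.vecMul, dotProduct, Pi.smul_apply, smul_eq_mul,
      Finset.sum_apply]
    have hstep : ∀ x, ((n : ℝ)⁻¹ * ∑ c ∈ Finset.range n, q c x) * P x t
        = (n : ℝ)⁻¹ * ∑ c ∈ Finset.range n, q c x * P x t := by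
      intro x; rw [mul_assoc, Finset.sum_mul]
    rw [Finset.sum_congr rfl fun x _ => hstep x, ← Finset.mul_sum, Finset.sum_comm]
    congr 1
  -- difference tends to zero
  have hqnorm : ∀ k, ‖q k‖ ≤ 1 := by
    intro k
    rw [pi_norm_le_iff_of_nonneg zero_le_one]
    intro t
    rw [Real.norm_eq_abs, abs_le]
    exact ⟨by linarith [(hP.pow k).1 s0 t], entry_le_one (hP.pow k) s0 t⟩
  have hdiff : Filter.Tendsto (fun n => a n ᵥ* P - a n) Filter.atTop (nhds 0) := by
    have heq : ∀ n, a n ᵥ* P - a n = (n : ℝ)⁻¹ • (q n - q 0) := by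
      intro n
      rw [hvec, ha]
      simp only
      rw [← smul_sub, ← Finset.sum_sub_distrib, Finset.sum_range_sub]
    have hb : ∀ n : ℕ, ‖a n ᵥ* P - a n‖ ≤ (n : ℝ)⁻¹ * 2 := by
      intro n
      rw [heq, norm_smul]
      have : ‖q n - q 0‖ ≤ 2 := by
        calc ‖q n - q 0‖ ≤ ‖q n‖ + ‖q 0‖ := norm_sub_le _ _
          _ ≤ 2 := by linarith [hqnorm n, hqnorm 0]
      calc ‖(n : ℝ)⁻¹‖ * ‖q n - q 0‖ ≤ ‖(n : ℝ)⁻¹‖ * 2 := by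
            exact mul_le_mul_of_nonneg_left this (norm_nonneg _)
        _ = (n : ℝ)⁻¹ * 2 := by rw [Real.norm_eq_abs, abs_of_nonneg (by positivity)]
    refine squeeze_zero_norm hb ?_
    have := (tendsto_inv_atTop_nhds_zero_nat).mul_const (2 : ℝ)
    simpa using this
  -- compactness of the simplex
  set K : Set (S → ℝ) := {v | (∀ s, 0 ≤ v s) ∧ ∑ s, v s = 1} with hK
  have hKclosed : IsClosed K := by
    have h1 : IsClosed {v : S → ℝ | ∀ s, 0 ≤ v s} := by
      have : {v : S → ℝ | ∀ s, 0 ≤ v s} = ⋂ s, {v | 0 ≤ v s} := by ext v; simp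
      rw [this]
      exact isClosed_iInter fun s => isClosed_le continuous_const (continuous_apply s)
    have h2 : IsClosed {v : S → ℝ | ∑ s, v s = 1} :=
      isClosed_eq (continuous_finset_sum _ fun s _ => continuous_apply s) continuous_const
    exact h1.inter h2
  have hKbdd : Bornology.IsBounded K := by
    refine (Metric.isBounded_closedBall (x := (0 : S → ℝ)) (r := 1)).subset ?_
    intro v hv
    rw [Metric.mem_closedBall, dist_zero_right]
    rw [pi_norm_le_iff_of_nonneg zero_le_one]
    intro t
    rw [Real.norm_eq_abs, abs_le]
    constructor
    · linarith [hv.1 t]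
    · calc v t ≤ ∑ s, v s := Finset.single_le_sum (fun u _ => hv.1 u) (Finset.mem_univ t)
        _ = 1 := hv.2
  have hKcompact : IsCompact K := Metric.isCompact_of_isClosed_isBounded hKclosed hKbdd
  -- the averages (for n ≥ 1) are in K
  have hmem : ∀ n : ℕ, a (n + 1) ∈ K := by
    intro n
    constructor
    · intro s
      simp only [ha, Pi.smul_apply, Finset.sum_apply, smul_eq_mul]
      refine mul_nonneg (by positivity) (Finset.sum_nonneg fun k _ => (hP.pow k).1 s0 s)
    · simp only [ha, Pi.smul_apply, Finset.sum_apply, smul_eq_mul]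
      rw [← Finset.mul_sum, Finset.sum_comm]
      have : ∀ k : ℕ, ∑ s, q k s = 1 := fun k => (hP.pow k).2 s0
      rw [Finset.sum_congr rfl fun k _ => this k]
      simp only [Finset.sum_const, Finset.card_range, nsmul_eq_mul, mul_one, Nat.cast_add,
        Nat.cast_one]
      exact inv_mul_cancel₀ (by positivity)
  obtain ⟨π, hπK, φ, hφ, hconv⟩ := hKcompact.tendsto_subseq (x := fun n => a (n + 1)) hmem
  refine ⟨π, hπK.1, hπK.2, ?_⟩
  -- continuity of vecMul
  have hcont : Continuous fun v : S → ℝ => v ᵥ* P := by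
    have : (fun v : S → ℝ => v ᵥ* P) = fun v => P.vecMulLinear v := by
      funext v; rw [Matrix.vecMulLinear_apply]
    rw [this]
    exact P.vecMulLinear.continuous_of_finiteDimensional
  have hA : Filter.Tendsto (fun n => a (φ n + 1) ᵥ* P) Filter.atTop (nhds (π ᵥ* P)) :=
    (hcont.tendsto π).comp hconv
  have hφtop : Filter.Tendsto (fun n => φ n + 1) Filter.atTop Filter.atTop :=
    Filter.tendsto_atTop_mono (fun n => Nat.le_add_right _ 1) hφ.tendsto_atTop
  have hB : Filter.Tendsto (fun n => a (φ n + 1) ᵥ* P - a (φ n + 1)) Filter.atTop (nhds 0) :=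
    hdiff.comp hφtop
  have hA' : Filter.Tendsto (fun n => a (φ n + 1) ᵥ* P) Filter.atTop (nhds π) := by
    have := hB.add hconv
    simpa using this
  exact tendsto_nhds_unique hA hA'

lemma stationary_pos {S : Type*} [Fintype S] [DecidableEq S] [Nonempty S]
    {P : Matrix S S ℝ} (hP : IsRowStochastic P) (hirr : ∀ s s', Reaches P s s')
    {π : S → ℝ} (hnn : ∀ s, 0 ≤ π s) (hsum : ∑ s, π s = 1) (hst : π ᵥ* P = π) :
    ∀ t, 0 < π t := by
  obtain ⟨s1, hs1⟩ : ∃ s, 0 < π s := by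
    by_contra h
    push_neg at h
    have : ∀ s, π s = 0 := fun s => le_antisymm (h s) (hnn s)
    simp [this] at hsum
  intro t
  have hreach := hirr s1 t
  induction hreach with
  | refl => exact hs1
  | tail hab hbc ih =>
    rename_i b c
    have hc := congr_fun hst c
    simp only [Matrix.vecMul, dotProduct] at hc
    rw [← hc]
    have h1 : 0 < π b * P b c := mul_pos ih hbc
    calc (0:ℝ) < π b * P b c := h1
      _ ≤ ∑ u, π u * P u c :=
        Finset.single_le_sum (fun u _ => mul_nonneg (hnn u) (hP.1 u c)) (Finset.mem_univ b)

lemma fixed_vector_const {S : Type*} [Fintype S] [DecidableEq S] [Nonempty S]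
    {P : Matrix S S ℝ} (hP : IsRowStochastic P) (hirr : ∀ s s', Reaches P s s')
    {g : S → ℝ} (hg : P.mulVec g = g) : ∃ γ : ℝ, g = fun _ => γ := by
  obtain ⟨s0, -, hs0⟩ := Finset.exists_max_image Finset.univ g ⟨Classical.arbitrary S,
    Finset.mem_univ _⟩
  refine ⟨g s0, funext fun t => ?_⟩
  have key : ∀ t, Reaches P s0 t → g t = g s0 := by
    intro t hreach
    induction hreach with
    | refl => rfl
    | tail hab hbc ih =>
      rename_i b c
      have hb := congr_fun hg b
      simp only [Matrix.mulVec, dotProduct] at hb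
      have hzero : ∑ u, P b u * (g s0 - g u) = 0 := by
        have : ∑ u, P b u * (g s0 - g u) = (∑ u, P b u) * g s0 - ∑ u, P b u * g u := by
          rw [Finset.sum_mul, ← Finset.sum_sub_distrib]
          exact Finset.sum_congr rfl fun u _ => by ring
        rw [this, hP.2 b, one_mul, hb, ih, sub_self]
      have hterm : P b c * (g s0 - g c) = 0 := by
        have := (Finset.sum_eq_zero_iff_of_nonneg
          (fun u _ => mul_nonneg (hP.1 b u) (by linarith [hs0 u (Finset.mem_univ u)]))).1 hzero
        exact this c (Finset.mem_univ c)
      have : g s0 - g c = 0 := by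
        rcases mul_eq_zero.1 hterm with h | h
        · exact absurd h hbc.ne'
        · exact h
      linarith
  exact key t (hirr s0 t)

lemma contraction_key {S : Type*} [Fintype S] [DecidableEq S]
    {P : Matrix S S ℝ} (hP : IsRowStochastic P)
    {π : S → ℝ} (hpos : ∀ s, 0 < π s) (hst : π ᵥ* P = π) (w : S → ℝ) :
    ∑ s, ((Matrix.diagonal (fun s => Real.sqrt (π s)) * P *
      Matrix.diagonal (fun s => (Real.sqrt (π s))⁻¹)) *ᵥ w) s ^ 2 ≤ ∑ s, w s ^ 2 := by
  set d : S → ℝ := fun s => Real.sqrt (π s) with hd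
  have hdpos : ∀ s, 0 < d s := fun s => Real.sqrt_pos.2 (hpos s)
  have hdsq : ∀ s, d s ^ 2 = π s := fun s => Real.sq_sqrt (hpos s).le
  set f : S → ℝ := fun t => (d t)⁻¹ * w t with hf
  have happ : ∀ s, ((Matrix.diagonal d * P * Matrix.diagonal fun s => (d s)⁻¹) *ᵥ w) s
      = d s * ∑ t, P s t * f t := by
    intro s
    simp only [Matrix.mulVec, dotProduct, Matrix.mul_diagonal, Matrix.diagonal_mul,
      Finset.mul_sum, hf]
    exact Finset.sum_congr rfl fun t _ => by ring
  calc ∑ s, ((Matrix.diagonal d * P * Matrix.diagonal fun s => (d s)⁻¹) *ᵥ w) s ^ 2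
      = ∑ s, π s * (∑ t, P s t * f t) ^ 2 := by
        refine Finset.sum_congr rfl fun s _ => ?_
        rw [happ s, mul_pow, hdsq s]
    _ ≤ ∑ s, π s * ∑ t, P s t * f t ^ 2 := by
        refine Finset.sum_le_sum fun s _ => mul_le_mul_of_nonneg_left ?_ (hpos s).le
        have hcs := Finset.sum_mul_sq_le_sq_mul_sq Finset.univ
          (fun t => Real.sqrt (P s t)) (fun t => Real.sqrt (P s t) * f t)
        have h1 : ∀ t, Real.sqrt (P s t) * (Real.sqrt (P s t) * f t) = P s t * f t := by
          intro t; rw [← mul_assoc, Real.mul_self_sqrt (hP.1 s t)]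
        have h2 : ∀ t, Real.sqrt (P s t) ^ 2 = P s t := fun t => Real.sq_sqrt (hP.1 s t)
        have h3 : ∀ t, (Real.sqrt (P s t) * f t) ^ 2 = P s t * f t ^ 2 := by
          intro t; rw [mul_pow, h2]
        rw [Finset.sum_congr rfl fun t _ => h1 t] at hcs
        rw [Finset.sum_congr rfl fun t _ => h2 t] at hcs
        rw [Finset.sum_congr rfl fun t _ => h3 t] at hcs
        rw [hP.2 s, one_mul] at hcs
        exact hcs
    _ = ∑ t, (∑ s, π s * P s t) * f t ^ 2 := by
        simp_rw [Finset.mul_sum]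
        rw [Finset.sum_comm]
        refine Finset.sum_congr rfl fun t _ => ?_
        rw [Finset.sum_mul]
        exact Finset.sum_congr rfl fun s _ => by ring
    _ = ∑ t, w t ^ 2 := by
        refine Finset.sum_congr rfl fun t _ => ?_
        have hπt : ∑ s, π s * P s t = π t := by
          have := congr_fun hst t
          simpa [Matrix.vecMul, dotProduct] using this
        rw [hπt, hf]
        simp only [mul_pow]
        rw [← mul_assoc, ← hdsq t]
        have : (d t ^ 2) * ((d t)⁻¹) ^ 2 = 1 := by
          rw [← mul_pow, mul_inv_cancel₀ (hdpos t).ne', one_pow]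
        rw [this, one_mul]

/-- If `P` is row-stochastic and irreducible, then there is a real `γ` such that the Cesàro
averages of the expected rewards converge to the constant vector `γ` (all states of a strongly
connected Markov chain have the same gain). -/
theorem irreducible_cesaro_tendsto_const {S : Type*} [Fintype S] [DecidableEq S] [Nonempty S]
    (P : Matrix S S ℝ) (r : S → ℝ) (hP : IsRowStochastic P)
    (hirr : ∀ s s', Reaches P s s') :
    ∃ γ : ℝ, Filter.Tendsto
      (fun n : ℕ => (n : ℝ)⁻¹ • ∑ k ∈ Finset.range n, (P ^ k).mulVec r)
      Filter.atTop (nhds fun _ => γ) := by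
  classical
  obtain ⟨π, hnn, hsum, hst⟩ := exists_stationary P hP
  have hpos := stationary_pos hP hirr hnn hsum hst
  set d : S → ℝ := fun s => Real.sqrt (π s) with hd
  have hdpos : ∀ s, 0 < d s := fun s => Real.sqrt_pos.2 (hpos s)
  set D : Matrix S S ℝ := Matrix.diagonal d with hD
  set Dinv : Matrix S S ℝ := Matrix.diagonal (fun s => (d s)⁻¹) with hDinv
  have hDinvD : Dinv * D = 1 := by
    rw [hDinv, hD, Matrix.diagonal_mul_diagonal]
    ext i j
    by_cases h : i = j <;> simp [Matrix.diagonal_apply, Matrix.one_apply, h,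
      inv_mul_cancel₀ (hdpos j).ne']
  have hDDinv : D * Dinv = 1 := by
    rw [hDinv, hD, Matrix.diagonal_mul_diagonal]
    ext i j
    by_cases h : i = j <;> simp [Matrix.diagonal_apply, Matrix.one_apply, h,
      mul_inv_cancel₀ (hdpos j).ne']
  set M : Matrix S S ℝ := D * P * Dinv with hM
  -- the operator on Euclidean space
  set T : EuclideanSpace ℝ S →L[ℝ] EuclideanSpace ℝ S :=
    LinearMap.toContinuousLinearMap (Matrix.toEuclideanLin M) with hT
  have hTapp : ∀ v : EuclideanSpace ℝ S,
      T v = (WithLp.equiv 2 (S → ℝ)).symm (M *ᵥ (WithLp.equiv 2 (S → ℝ) v)) := by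
    intro v
    rw [hT, LinearMap.coe_toContinuousLinearMap', Matrix.toEuclideanLin_apply]
    rfl
  have hTnorm : ‖T‖ ≤ 1 := by
    refine ContinuousLinearMap.opNorm_le_bound _ zero_le_one fun x => ?_
    rw [one_mul, EuclideanSpace.norm_eq, EuclideanSpace.norm_eq]
    refine Real.sqrt_le_sqrt ?_
    have := contraction_key hP hpos hst (WithLp.equiv 2 (S → ℝ) x)
    simp only [Real.norm_eq_abs, sq_abs]
    calc ∑ i, (T x i) ^ 2
        = ∑ i, ((M *ᵥ (WithLp.equiv 2 (S → ℝ) x)) i) ^ 2 := by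
          refine Finset.sum_congr rfl fun i _ => ?_
          rw [hTapp x]
          rfl
      _ ≤ ∑ i, ((WithLp.equiv 2 (S → ℝ) x) i) ^ 2 := this
      _ = ∑ i, (x i) ^ 2 := rfl
  set x0 : EuclideanSpace ℝ S := (WithLp.equiv 2 (S → ℝ)).symm (D *ᵥ r) with hx0
  have hErg := ContinuousLinearMap.tendsto_birkhoffAverage_orthogonalProjection (𝕜 := ℝ)
    T hTnorm x0
  set yv : EuclideanSpace ℝ S :=
    (Submodule.orthogonalProjectionOnto (LinearMap.eqLocus (T : EuclideanSpace ℝ S →ₗ[ℝ] EuclideanSpace ℝ S) 1)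
      x0 : EuclideanSpace ℝ S) with hyv
  have hfix : T yv = yv := by
    have hmem := (Submodule.orthogonalProjectionOnto
      (LinearMap.eqLocus (T : EuclideanSpace ℝ S →ₗ[ℝ] EuclideanSpace ℝ S) 1) x0).2
    rw [LinearMap.mem_eqLocus] at hmem
    exact hmem
  -- conjugation identity for powers
  have hMpowD : ∀ k : ℕ, M ^ k * D = D * P ^ k := by
    intro k
    induction k with
    | zero => simp
    | succ k ih =>
      rw [pow_succ', mul_assoc, ih, hM]
      rw [mul_assoc (D * P) Dinv (D * P ^ k), ← mul_assoc Dinv D (P ^ k), hDinvD, one_mul,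
        mul_assoc, ← pow_succ']
  have hiter : ∀ (k : ℕ) (v : EuclideanSpace ℝ S),
      T^[k] v = (WithLp.equiv 2 (S → ℝ)).symm ((M ^ k) *ᵥ (WithLp.equiv 2 (S → ℝ) v)) := by
    intro k
    induction k with
    | zero =>
      intro v
      simp only [Function.iterate_zero, id_eq, pow_zero, Matrix.one_mulVec]
      exact (Equiv.symm_apply_apply _ v).symm
    | succ k ih =>
      intro v
      rw [Function.iterate_succ_apply', ih, hTapp, Equiv.apply_symm_apply,
        Matrix.mulVec_mulVec, ← pow_succ']
  set a : ℕ → S → ℝ := fun n => (n : ℝ)⁻¹ • ∑ k ∈ Finset.range n, (P ^ k) *ᵥ r with haa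
  set e := PiLp.continuousLinearEquiv 2 ℝ (fun _ : S => ℝ) with he
  have heapp : ∀ v : EuclideanSpace ℝ S, e v = WithLp.equiv 2 (S → ℝ) v := fun v => rfl
  have hseq : ∀ n, e (birkhoffAverage ℝ (⇑T) _root_.id n x0) = D *ᵥ a n := by
    intro n
    rw [birkhoffAverage, birkhoffSum, _root_.map_smul, _root_.map_sum]
    have hterm : ∀ k, e (_root_.id (T^[k] x0)) = D *ᵥ ((P ^ k) *ᵥ r) := by
      intro k
      rw [id_eq, hiter k x0, heapp, Equiv.apply_symm_apply, hx0, Equiv.apply_symm_apply,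
        Matrix.mulVec_mulVec, hMpowD, ← Matrix.mulVec_mulVec]
    rw [Finset.sum_congr rfl fun k _ => hterm k, haa]
    have hsum' : D *ᵥ (∑ k ∈ Finset.range n, (P ^ k) *ᵥ r)
        = ∑ k ∈ Finset.range n, D *ᵥ ((P ^ k) *ᵥ r) := by
      have := map_sum (Matrix.mulVecLin D) (fun k => (P ^ k) *ᵥ r) (Finset.range n)
      simp only [Matrix.mulVecLin_apply] at this
      exact this
    rw [Matrix.mulVec_smul, hsum']
  have hDa : Filter.Tendsto (fun n => D *ᵥ a n) Filter.atTop (nhds (e yv)) := by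
    have h := (e.continuous.tendsto yv).comp hErg
    have : (fun n => e (birkhoffAverage ℝ (⇑T) _root_.id n x0)) = fun n => D *ᵥ a n :=
      funext fun n => hseq n
    rw [← this]
    exact h
  have hcontDinv : Continuous fun v : S → ℝ => Dinv *ᵥ v := by
    have : (fun v : S → ℝ => Dinv *ᵥ v) = fun v => Dinv.mulVecLin v := by
      funext v; rw [Matrix.mulVecLin_apply]
    rw [this]
    exact Dinv.mulVecLin.continuous_of_finiteDimensional
  have hA : Filter.Tendsto a Filter.atTop (nhds (Dinv *ᵥ (e yv))) := by
    have h2 := (hcontDinv.tendsto (e yv)).comp hDa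
    have h3 : (fun n => Dinv *ᵥ (D *ᵥ a n)) = a := by
      funext n; rw [Matrix.mulVec_mulVec, hDinvD, Matrix.one_mulVec]
    rw [show ((fun v : S → ℝ => Dinv *ᵥ v) ∘ fun n => D *ᵥ a n) = fun n => Dinv *ᵥ (D *ᵥ a n)
      from rfl, h3] at h2
    exact h2
  set g : S → ℝ := Dinv *ᵥ (e yv) with hgdef
  have hMy : M *ᵥ (e yv) = e yv := by
    have h1 : e (T yv) = M *ᵥ (e yv) := by
      rw [hTapp yv, heapp, Equiv.apply_symm_apply, ← heapp yv]
    rw [← h1]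
    exact congrArg e hfix
  have hgfix : P *ᵥ g = g := by
    have hPD : P * Dinv = Dinv * M := by
      rw [hM, ← mul_assoc, ← mul_assoc, hDinvD, one_mul]
    rw [hgdef, Matrix.mulVec_mulVec, hPD, ← Matrix.mulVec_mulVec, hMy]
  obtain ⟨γ, hγ⟩ := fixed_vector_const hP hirr hgfix
  exact ⟨γ, hγ ▸ hA⟩
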